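/- arXiv:2203.01494 — 5 statements merged into one kernel-verified Lean document; each statement's English description precedes it below -/
import Mathlib

section
/- Let ν > 0, 0 < m_min < m_max, and δ_S* > 0. Define δ_D* = (4ν²·m_min·m_max + ν·(m_min + m_max)·δ_S*) / (ν·(m_min + m_max) + δ_S*). Then the function ρ̂(δ_D, m) = ((2νm − δ_D)/(2νm + δ_S*))² satisfies ρ̂(δ_D*, m_min) = ρ̂(δ_D*, m_max), i.e. δ_D* equilibrates the squared convergence factor at the two endpoint frequencies. -/
theorem stmt_3 (ν mmin mmax δS : ℝ) (hν : 0 < ν) (hmin : 0 < mmin)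
    (hlt : mmin < mmax) (hδS : 0 < δS) :
    let δD := (4 * ν ^ 2 * mmin * mmax + ν * (mmin + mmax) * δS) /
      (ν * (mmin + mmax) + δS)
    ((2 * ν * mmin - δD) / (2 * ν * mmin + δS)) ^ 2 =
      ((2 * ν * mmax - δD) / (2 * ν * mmax + δS)) ^ 2 := by
  intro δD
  have h1 : (0:ℝ) < 2 * ν * mmin + δS := by positivity
  have h2 : (0:ℝ) < 2 * ν * mmax + δS := by nlinarith
  have h3 : (0:ℝ) < ν * (mmin + mmax) + δS := by nlinarith
  show ((2 * ν * mmin - δD) / (2 * ν * mmin + δS)) ^ 2 =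
      ((2 * ν * mmax - δD) / (2 * ν * mmax + δS)) ^ 2
  unfold δD
  field_simp
  ring
end

section
/- Let ν > 0, 0 < m_min < m_max, δ_S* > 0, and let δ_D* = (4ν²·m_min·m_max + ν·(m_min + m_max)·δ_S*) / (ν·(m_min + m_max) + δ_S*). Then ρ(δ_S*, δ_D*, m_min) < 1 and ρ(δ_S*, δ_D*, m_max) < 1, where ρ(δ_S, δ_D, m) = |2νm − δ_D|/(2νm + δ_S). -/
theorem stmt_4 (ν mmin mmax δS : ℝ) (hν : 0 < ν) (hmin : 0 < mmin)
    (hlt : mmin < mmax) (hδS : 0 < δS) :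
    let δD := (4 * ν ^ 2 * mmin * mmax + ν * (mmin + mmax) * δS) /
      (ν * (mmin + mmax) + δS)
    |2 * ν * mmin - δD| / (2 * ν * mmin + δS) < 1 ∧
    |2 * ν * mmax - δD| / (2 * ν * mmax + δS) < 1 := by
  intro δD
  have hmax : 0 < mmax := hmin.trans hlt
  have hden : 0 < ν * (mmin + mmax) + δS := by positivity
  have hδD : 0 < δD := by
    apply div_pos _ hden
    positivity
  have key : ∀ m : ℝ, 0 < m → δD < 4 * ν * m + δS →
      |2 * ν * m - δD| / (2 * ν * m + δS) < 1 := by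
    intro m hm hub
    rw [div_lt_one (by positivity), abs_lt]
    constructor <;> nlinarith
  have h1 : δD < 4 * ν * mmin + δS := by
    rw [div_lt_iff₀ hden]
    nlinarith [mul_pos (mul_pos hν hmin) hδS, sq_nonneg (2 * ν * mmin), mul_pos hδS hδS]
  have h2 : δD < 4 * ν * mmax + δS := by
    rw [div_lt_iff₀ hden]
    nlinarith [mul_pos (mul_pos hν hmax) hδS, sq_nonneg (2 * ν * mmax), mul_pos hδS hδS]
  exact ⟨key mmin hmin h1, key mmax hmax h2⟩
end

section
/- Let ν > 0 and δ_S* > 0 be fixed, and 0 < m_min < m_max. The function δ_D ↦ max{ρ̂(δ_D, m_min), ρ̂(δ_D, m_max)}, where ρ̂(δ_D, m) = ((2νm − δ_D)/(2νm + δ_S*))², equals ρ̂(δ_D, m_max) for δ_D ≤ δ_D* and equals ρ̂(δ_D, m_min) for δ_D > δ_D*, where δ_D* = (4ν²·m_min·m_max + ν·(m_min + m_max)·δ_S*)/(ν·(m_min + m_max) + δ_S*). Consequently δ_D* minimizes δ_D ↦ max{ρ̂(δ_D, m_min), ρ̂(δ_D, m_max)} over δ_D > 0. -/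
theorem stmt_7 (ν mmin mmax δS : ℝ) (hν : 0 < ν) (hmin : 0 < mmin)
    (hlt : mmin < mmax) (hδS : 0 < δS) :
    let ρhat : ℝ → ℝ → ℝ := fun δD m => ((2 * ν * m - δD) / (2 * ν * m + δS)) ^ 2
    let δDstar := (4 * ν ^ 2 * mmin * mmax + ν * (mmin + mmax) * δS) /
      (ν * (mmin + mmax) + δS)
    (∀ δD : ℝ, 0 < δD → δD ≤ δDstar →
        max (ρhat δD mmin) (ρhat δD mmax) = ρhat δD mmax) ∧
    (∀ δD : ℝ, δDstar < δD →
        max (ρhat δD mmin) (ρhat δD mmax) = ρhat δD mmin) ∧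
    (∀ δD : ℝ, 0 < δD →
        max (ρhat δDstar mmin) (ρhat δDstar mmax) ≤
          max (ρhat δD mmin) (ρhat δD mmax)) := by
  intro ρhat δDstar
  have hD : 0 < ν * (mmin + mmax) + δS := by nlinarith
  have ha : 0 < 2 * ν * mmin + δS := by nlinarith
  have hb : 0 < 2 * ν * mmax + δS := by nlinarith
  have hstar : δDstar = (4 * ν ^ 2 * mmin * mmax + ν * (mmin + mmax) * δS) /
      (ν * (mmin + mmax) + δS) := rfl
  have hlow : 2 * ν * mmin ≤ δDstar := by
    rw [hstar, le_div_iff₀ hD]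
    nlinarith [mul_pos (sub_pos.mpr hlt) (mul_pos hν (by nlinarith : (0:ℝ) < 2 * ν * mmin + δS))]
  have hhigh : δDstar ≤ 2 * ν * mmax := by
    rw [hstar, div_le_iff₀ hD]
    nlinarith [mul_pos (sub_pos.mpr hlt) (mul_pos hν (by nlinarith : (0:ℝ) < 2 * ν * mmax + δS))]
  have hpos : 0 < δDstar := by nlinarith
  have key_le : ∀ δD : ℝ, 0 < δD → δD ≤ δDstar → ρhat δD mmin ≤ ρhat δD mmax := by
    intro δD h0 hle
    have h : δD * (ν * (mmin + mmax) + δS) ≤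
        4 * ν ^ 2 * mmin * mmax + ν * (mmin + mmax) * δS := by
      rw [hstar] at hle; exact (le_div_iff₀ hD).mp hle
    have h1 : 0 ≤ (2 * ν * mmax - δD) * (2 * ν * mmin + δS) -
        (2 * ν * mmin - δD) * (2 * ν * mmax + δS) := by nlinarith
    have h2 : 0 ≤ (2 * ν * mmax - δD) * (2 * ν * mmin + δS) +
        (2 * ν * mmin - δD) * (2 * ν * mmax + δS) := by nlinarith
    show ((2 * ν * mmin - δD) / (2 * ν * mmin + δS)) ^ 2 ≤
        ((2 * ν * mmax - δD) / (2 * ν * mmax + δS)) ^ 2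
    rw [div_pow, div_pow, div_le_div_iff₀ (by positivity) (by positivity)]
    nlinarith [mul_nonneg h1 h2]
  have key_ge : ∀ δD : ℝ, 0 < δD → δDstar ≤ δD → ρhat δD mmax ≤ ρhat δD mmin := by
    intro δD h0 hge
    have h : 4 * ν ^ 2 * mmin * mmax + ν * (mmin + mmax) * δS ≤
        δD * (ν * (mmin + mmax) + δS) := by
      rw [hstar] at hge; exact (div_le_iff₀ hD).mp hge
    have h1 : 0 ≤ (2 * ν * mmax - δD) * (2 * ν * mmin + δS) -
        (2 * ν * mmin - δD) * (2 * ν * mmax + δS) := by nlinarith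
    have h2 : (2 * ν * mmax - δD) * (2 * ν * mmin + δS) +
        (2 * ν * mmin - δD) * (2 * ν * mmax + δS) ≤ 0 := by nlinarith
    show ((2 * ν * mmax - δD) / (2 * ν * mmax + δS)) ^ 2 ≤
        ((2 * ν * mmin - δD) / (2 * ν * mmin + δS)) ^ 2
    rw [div_pow, div_pow, div_le_div_iff₀ (by positivity) (by positivity)]
    nlinarith [mul_nonpos_of_nonneg_of_nonpos h1 h2]
  refine ⟨fun δD h0 hle => max_eq_right (key_le δD h0 hle),
    fun δD hgt => max_eq_left (key_ge δD (hpos.trans hgt) hgt.le), ?_⟩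
  intro δD h0
  rcases le_total δD δDstar with hle | hge
  · rw [max_eq_right (key_le δD h0 hle)]
    refine max_le ((key_le δDstar hpos le_rfl).trans ?_) ?_ <;>
    · show ((2 * ν * mmax - δDstar) / (2 * ν * mmax + δS)) ^ 2 ≤
          ((2 * ν * mmax - δD) / (2 * ν * mmax + δS)) ^ 2
      rw [div_pow, div_pow, div_le_div_iff₀ (by positivity) (by positivity)]
      nlinarith [mul_nonneg (mul_nonneg (sub_nonneg.mpr hle)
        (by linarith : (0:ℝ) ≤ 4 * ν * mmax - δDstar - δD)) (sq_nonneg (2 * ν * mmax + δS))]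
  · rw [max_eq_left (key_ge δD h0 hge)]
    refine max_le ?_ ((key_ge δDstar hpos le_rfl).trans ?_) <;>
    · show ((2 * ν * mmin - δDstar) / (2 * ν * mmin + δS)) ^ 2 ≤
          ((2 * ν * mmin - δD) / (2 * ν * mmin + δS)) ^ 2
      rw [div_pow, div_pow, div_le_div_iff₀ (by positivity) (by positivity)]
      nlinarith [mul_nonneg (mul_nonneg (sub_nonneg.mpr hge)
        (by linarith : (0:ℝ) ≤ δDstar + δD - 4 * ν * mmin)) (sq_nonneg (2 * ν * mmin + δS))]
end

section
/- For any vectors u_S, u_D and unit normals n_S = −n_D on an interface, and positive constants δ_S, δ_D, the algebraic system g_S = σ_n − δ_S·(u_S·n_S) and g_D = gφ − δ_D·(u_D·n_D), where σ_n denotes −n_S·(T·n_S), satisfies: the pair of conditions {u_S·n_S + u_D·n_D = 0 and σ_n = gφ} holds if and only if the pair of compatibility relations {g_D = g_S + (δ_S + δ_D)·(u_S·n_S) and g_S = g_D + (δ_S + δ_D)·(u_D·n_D)} holds. -/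
theorem stmt_16 (a b σn φ gS gD δS δD : ℝ)
    (hδS : 0 < δS) (hδD : 0 < δD)
    (hgS : gS = σn - δS * a) (hgD : gD = φ - δD * b) :
    (a + b = 0 ∧ σn = φ) ↔
      (gD = gS + (δS + δD) * a ∧ gS = gD + (δS + δD) * b) := by
  subst hgS hgD
  constructor
  · rintro ⟨h1, h2⟩
    constructor <;> nlinarith
  · rintro ⟨h1, h2⟩
    constructor <;> nlinarith [hδS.le, hδD.le, mul_pos hδS hδD]
end

section
/- Let ν > 0, 0 < m_min < m_max, and δ_S > 0. For the balanced parameter δ_D* = (4ν²·m_min·m_max + ν(m_min+m_max)·δ_S)/(ν(m_min+m_max) + δ_S), the common optimal convergence rate is ρ* = (2ν·m_max − δ_D*)/(2ν·m_max + δ_S) = (δ_D* − 2ν·m_min)/(2ν·m_min + δ_S), and 0 < ρ* < 1. -/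
theorem stmt_19 (ν mmin mmax δS : ℝ) (hν : 0 < ν) (hmin : 0 < mmin)
    (hlt : mmin < mmax) (hδS : 0 < δS) :
    let δD := (4 * ν ^ 2 * mmin * mmax + ν * (mmin + mmax) * δS) /
      (ν * (mmin + mmax) + δS)
    let ρstar := (2 * ν * mmax - δD) / (2 * ν * mmax + δS)
    ρstar = (δD - 2 * ν * mmin) / (2 * ν * mmin + δS) ∧
    0 < ρstar ∧ ρstar < 1 := by
  intro δD ρstar
  have hD : 0 < ν * (mmin + mmax) + δS := by nlinarith
  have h1 : 0 < 2 * ν * mmax + δS := by nlinarith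
  have h2 : 0 < 2 * ν * mmin + δS := by positivity
  have key : ρstar = ν * (mmax - mmin) / (ν * (mmin + mmax) + δS) := by
    show (2 * ν * mmax - δD) / (2 * ν * mmax + δS) = _
    rw [show δD = (4 * ν ^ 2 * mmin * mmax + ν * (mmin + mmax) * δS) /
      (ν * (mmin + mmax) + δS) from rfl]
    field_simp
    ring
  have key2 : (δD - 2 * ν * mmin) / (2 * ν * mmin + δS)
      = ν * (mmax - mmin) / (ν * (mmin + mmax) + δS) := by
    rw [show δD = (4 * ν ^ 2 * mmin * mmax + ν * (mmin + mmax) * δS) /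
      (ν * (mmin + mmax) + δS) from rfl]
    field_simp
    ring
  refine ⟨key.trans key2.symm, ?_, ?_⟩
  · rw [key]; have : 0 < mmax - mmin := by linarith
    positivity
  · rw [key, div_lt_one hD]; nlinarith
end
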